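/- Let D, D' be triangulated categories and Φ : D → D, Φ' : D' → D', Ψ : D → D' be exact functors such that Ψ∘Φ ≅ Φ'∘Ψ as functors. Let G be a split-generator of D such that Ψ G is a split-generator of D'. Then for every t ∈ ℝ and every n ≥ 1, δ_t(Ψ G, Φ'ⁿ(Ψ G)) ≤ δ_t(G, Φⁿ G), and consequently limsup_{n→∞} (1/n)·log δ_t(Ψ G, Φ'ⁿ(Ψ G)) ≤ limsup_{n→∞} (1/n)·log δ_t(G, Φⁿ G). (In terms of categorical entropy, h_t(Φ) ≥ h_t(Φ').) -/

import Mathlib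

open CategoryTheory CategoryTheory.Limits CategoryTheory.Pretriangulated Filter
open scoped ENNReal

universe v₁ v₂ u₁ u₂

variable {D : Type u₁} [Category.{v₁} D] [Preadditive D] [HasZeroObject D]
  [HasShift D ℤ] [∀ n : ℤ, (shiftFunctor D n).Additive] [Pretriangulated D]

/-- An object `F` admits a cone decomposition with the given list of components. -/
inductive ConeDecomp : D → List D → Prop
  | nil {F : D} (h : IsZero F) : ConeDecomp F []
  | step {X : D} (F : D) {l : List D} (A : D) (hX : ConeDecomp X l)
      (f : X ⟶ F) (g : F ⟶ A) (h : A ⟶ X⟦(1 : ℤ)⟧)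
      (ht : Triangle.mk f g h ∈ distTriang D) : ConeDecomp F (l ++ [A])

open scoped Classical in
/-- The categorical complexity `δ_t(E,F)`. -/
noncomputable def catDelta [HasBinaryBiproducts D] (t : ℝ) (E F : D) : ℝ≥0∞ :=
  if IsZero F then 0
  else sInf {x : ℝ≥0∞ | ∃ (ns : List ℤ) (F' : D),
      ns ≠ [] ∧ ConeDecomp (F ⊞ F') (ns.map fun n => E⟦n⟧) ∧
      x = (ns.map fun n => ENNReal.ofReal (Real.exp ((n : ℝ) * t))).sum}

/-- Objects split-generated by `G`. -/
inductive SplitGen (G : D) : D → Prop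
  | self : SplitGen G G
  | zero {X : D} (h : IsZero X) : SplitGen G X
  | ofIso {X Y : D} (e : X ≅ Y) (h : SplitGen G X) : SplitGen G Y
  | shift {X : D} (n : ℤ) (h : SplitGen G X) : SplitGen G (X⟦n⟧)
  | cone₂ {X Y Z : D} (f : X ⟶ Y) (g : Y ⟶ Z) (h : Z ⟶ X⟦(1 : ℤ)⟧)
      (ht : Triangle.mk f g h ∈ distTriang D) (hX : SplitGen G X) (hZ : SplitGen G Z) :
      SplitGen G Y
  | summand {X Y : D} (s : X ⟶ Y) (p : Y ⟶ X) (hsp : s ≫ p = 𝟙 X)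
      (h : SplitGen G Y) : SplitGen G X

/-- `G` is a split-generator. -/
def IsSplitGenerator (G : D) : Prop := ∀ X : D, SplitGen G X

section Aux

lemma forall₂_concat_left {α β : Type*} {R : α → β → Prop} :
    ∀ {l : List α} {A : α} {l' : List β}, List.Forall₂ R (l ++ [A]) l' →
      ∃ l₁ B, l' = l₁ ++ [B] ∧ List.Forall₂ R l l₁ ∧ R A B := by
  intro l
  induction l with
  | nil =>
    intro A l' h
    rw [List.nil_append, List.forall₂_cons_left_iff] at h
    obtain ⟨B, u, hAB, hu, rfl⟩ := h
    rw [List.forall₂_nil_left_iff] at hu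
    subst hu
    exact ⟨[], B, rfl, List.Forall₂.nil, hAB⟩
  | cons a l ih =>
    intro A l' h
    rw [List.cons_append, List.forall₂_cons_left_iff] at h
    obtain ⟨B, u, haB, hu, rfl⟩ := h
    obtain ⟨l₁, C, rfl, h₁, hAC⟩ := ih hu
    exact ⟨B :: l₁, C, rfl, List.Forall₂.cons haB h₁, hAC⟩

/-- `ConeDecomp` is invariant under isomorphisms of the object and of the components. -/
lemma ConeDecomp.of_iso {F : D} {l : List D} (h : ConeDecomp F l) :
    ∀ {F' : D} {l' : List D}, (F ≅ F') →
      List.Forall₂ (fun A B => Nonempty (A ≅ B)) l l' → ConeDecomp F' l' := by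
  induction h with
  | nil h =>
    intro F' l' e hl
    rw [List.forall₂_nil_left_iff] at hl
    subst hl
    exact ConeDecomp.nil (h.of_iso e.symm)
  | step F A hX f g h ht ih =>
    rename_i X l
    intro F' l' e hl
    obtain ⟨l₁, B, rfl, h₁, ⟨iA⟩⟩ := forall₂_concat_left hl
    refine ConeDecomp.step F' B (ih (Iso.refl X) h₁) (f ≫ e.hom)
      (e.inv ≫ g ≫ iA.hom) (iA.inv ≫ h) ?_
    refine isomorphic_distinguished _ ht _ ?_
    exact Triangle.isoMk _ _ (Iso.refl X) e.symm iA.symm 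
      (by show (f ≫ e.hom) ≫ e.inv = 𝟙 X ≫ f; simp)
      (by show (e.inv ≫ g ≫ iA.hom) ≫ iA.inv = e.inv ≫ g; simp)
      (by show (iA.inv ≫ h) ≫ (shiftFunctor D 1).map (𝟙 X) = iA.inv ≫ h; simp)

lemma forall₂_map_iso {f g : ℤ → D} (i : ∀ n, f n ≅ g n) (ns : List ℤ) :
    List.Forall₂ (fun A B : D => Nonempty (A ≅ B)) (ns.map f) (ns.map g) := by
  induction ns with
  | nil => simp
  | cons n ns ih => exact List.Forall₂.cons ⟨i n⟩ ih

variable {D' : Type u₂} [Category.{v₂} D'] [Preadditive D'] [HasZeroObject D'] [HasShift D' ℤ]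
  [∀ n : ℤ, (shiftFunctor D' n).Additive] [Pretriangulated D']

/-- An exact functor sends a cone decomposition to a cone decomposition. -/
lemma ConeDecomp.map (Ψ : D ⥤ D') [Ψ.CommShift ℤ] [Ψ.IsTriangulated]
    {F : D} {l : List D} (h : ConeDecomp F l) :
    ConeDecomp (Ψ.obj F) (l.map Ψ.obj) := by
  induction h with
  | nil h => exact ConeDecomp.nil (Ψ.map_isZero h)
  | step F A hX f g h ht ih =>
    rename_i X l
    rw [List.map_append, List.map_singleton]
    exact ConeDecomp.step (Ψ.obj F) (Ψ.obj A) ih (Ψ.map f) (Ψ.map g)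
      (Ψ.map h ≫ (Ψ.commShiftIso (1 : ℤ)).hom.app X) (Ψ.map_distinguished _ ht)

/-- `catDelta` only decreases along an exact functor. -/
lemma catDelta_map_le [HasBinaryBiproducts D] [HasBinaryBiproducts D']
    (Ψ : D ⥤ D') [Ψ.CommShift ℤ] [Ψ.IsTriangulated] (t : ℝ) (E F : D) :
    catDelta t (Ψ.obj E) (Ψ.obj F) ≤ catDelta t E F := by
  classical
  unfold catDelta
  by_cases hF : IsZero F
  · simp [hF, Ψ.map_isZero hF]
  · rw [if_neg hF]
    split_ifs with h
    · exact zero_le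
    · refine sInf_le_sInf ?_
      rintro x ⟨ns, F', hns, hcd, rfl⟩
      refine ⟨ns, Ψ.obj F', hns, ?_, rfl⟩
      have h1 := hcd.map Ψ
      rw [List.map_map] at h1
      haveI : PreservesBinaryBiproduct F F' Ψ :=
        preservesBinaryBiproduct_of_preservesBiproduct Ψ F F'
      refine h1.of_iso (Ψ.mapBiprod F F') ?_
      exact forall₂_map_iso (fun n => (Ψ.commShiftIso n).app E) ns

/-- `catDelta` is invariant under isomorphism in the second variable. -/
lemma catDelta_congr [HasBinaryBiproducts D] (t : ℝ) (E : D) {F F' : D} (e : F ≅ F') :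
    catDelta t E F = catDelta t E F' := by
  classical
  have key : ∀ {X Y : D}, (X ≅ Y) → catDelta t E X ≤ catDelta t E Y := by
    intro X Y i
    unfold catDelta
    by_cases hY : IsZero Y
    · simp [hY, hY.of_iso i]
    · have hX : ¬ IsZero X := fun h => hY (h.of_iso i.symm)
      rw [if_neg hX, if_neg hY]
      refine sInf_le_sInf ?_
      rintro x ⟨ns, F'', hns, hcd, rfl⟩
      refine ⟨ns, F'', hns, ?_, rfl⟩
      refine hcd.of_iso (biprod.mapIso i.symm (Iso.refl F'')) ?_
      exact forall₂_map_iso (fun n => Iso.refl _) ns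
  exact le_antisymm (key e) (key e.symm)

end Aux

/-- Lemma 2.5: if `Ψ ∘ Φ ≅ Φ' ∘ Ψ` and `Ψ G` is a split-generator, then `h_t(Φ) ≥ h_t(Φ')`. -/
theorem entropy_ge_of_intertwine [HasBinaryBiproducts D]
    {D' : Type u₂} [Category.{v₂} D'] [Preadditive D'] [HasZeroObject D'] [HasShift D' ℤ]
    [∀ n : ℤ, (shiftFunctor D' n).Additive] [Pretriangulated D'] [HasBinaryBiproducts D']
    (Φ : D ⥤ D) [Φ.CommShift ℤ] [Φ.IsTriangulated]
    (Φ' : D' ⥤ D') [Φ'.CommShift ℤ] [Φ'.IsTriangulated]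
    (Ψ : D ⥤ D') [Ψ.CommShift ℤ] [Ψ.IsTriangulated]
    (e : Φ ⋙ Ψ ≅ Ψ ⋙ Φ')
    (G : D) (hG : IsSplitGenerator G) (hΨG : IsSplitGenerator (Ψ.obj G)) (t : ℝ) :
    (∀ n : ℕ, 1 ≤ n →
      catDelta t (Ψ.obj G) ((Φ'.obj)^[n] (Ψ.obj G)) ≤ catDelta t G ((Φ.obj)^[n] G)) ∧
    limsup (fun n : ℕ => ((n : ℝ)⁻¹ : EReal) *
        ENNReal.log (catDelta t (Ψ.obj G) ((Φ'.obj)^[n] (Ψ.obj G)))) atTop ≤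
      limsup (fun n : ℕ => ((n : ℝ)⁻¹ : EReal) *
        ENNReal.log (catDelta t G ((Φ.obj)^[n] G))) atTop := by
  have iter : ∀ n : ℕ, Nonempty (Ψ.obj ((Φ.obj)^[n] G) ≅ (Φ'.obj)^[n] (Ψ.obj G)) := by
    intro n
    induction n with
    | zero => exact ⟨Iso.refl _⟩
    | succ n ih =>
      obtain ⟨i⟩ := ih
      refine ⟨?_⟩
      rw [Function.iterate_succ_apply', Function.iterate_succ_apply']
      exact e.app ((Φ.obj)^[n] G) ≪≫ Φ'.mapIso i
  have key : ∀ n : ℕ,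
      catDelta t (Ψ.obj G) ((Φ'.obj)^[n] (Ψ.obj G)) ≤ catDelta t G ((Φ.obj)^[n] G) := by
    intro n
    obtain ⟨i⟩ := iter n
    calc catDelta t (Ψ.obj G) ((Φ'.obj)^[n] (Ψ.obj G))
        = catDelta t (Ψ.obj G) (Ψ.obj ((Φ.obj)^[n] G)) := (catDelta_congr t _ i).symm
      _ ≤ catDelta t G ((Φ.obj)^[n] G) := catDelta_map_le Ψ t G _
  refine ⟨fun n _ => key n, ?_⟩
  refine limsup_le_limsup (Eventually.of_forall fun n => ?_)
  refine mul_le_mul_of_nonneg_left ?_ ?_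
  · exact ENNReal.log_monotone (key n)
  · exact EReal.coe_nonneg.mpr (inv_nonneg.mpr (Nat.cast_nonneg n))
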